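/- Let n ≥ 3 and ε > 0, and let X be a set of 3-element subsets of Fin n with |X| ≤ n^{2+ε}, such that every triangle of Fin n admits a ℤ/2-filling contained in X, and such that ‖dβ‖²_X ≥ (n^{ε}/3)·‖β‖² for every coclosed 1-cochain β. Then for every map φ from Fin n to a real inner product space satisfying Area(φτ) ≥ Fill_X(τ) for every triangle τ, there exists a face f ∈ X with Area(φf)² ≥ (1/(9·n³))·Σ_τ Fill_X(τ)², the sum running over all triangles τ of Fin n. -/

import Mathlib

open Finset

/-- `y` is a ℤ/2-filling of the triangle `τ`: `y` consists of 3-element subsets, and for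
every edge `e` the number of members of `y` containing `e` has the same parity as the
indicator that `e ⊆ τ`. -/
def IsFilling {n : ℕ} (y : Finset (Finset (Fin n))) (τ : Finset (Fin n)) : Prop :=
  (∀ f ∈ y, f.card = 3) ∧
  ∀ e : Finset (Fin n), e.card = 2 →
    (y.filter (fun f => e ⊆ f)).card % 2 = (if e ⊆ τ then 1 else 0)

/-- `Fill_X(τ)`: the minimal cardinality of a ℤ/2-filling of `τ` contained in `X`. -/
noncomputable def fillIn {n : ℕ} (X : Finset (Finset (Fin n))) (τ : Finset (Fin n)) : ℕ :=
  sInf {m | ∃ y ⊆ X, IsFilling y τ ∧ y.card = m}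

/-- The coboundary of a 1-cochain evaluated on a triangle `{u,v,w}` with `u < v < w`. -/
def dOne {n : ℕ} (β : Fin n → Fin n → ℝ) (f : Finset (Fin n)) : ℝ :=
  match f.sort (· ≤ ·) with
  | [u, v, w] => β u v - β u w + β v w
  | _ => 0

/-- `‖β‖² = ∑_{u<v} β(u,v)²`. -/
def normSq {n : ℕ} (β : Fin n → Fin n → ℝ) : ℝ :=
  ∑ u : Fin n, ∑ v ∈ Finset.univ.filter (fun v => u < v), β u v ^ 2

/-- The area of the affine image of a triangle `τ = {a,b,c}` (with `a < b < c`) under `φ`. -/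
noncomputable def triArea {n : ℕ} {H : Type*} [NormedAddCommGroup H] [InnerProductSpace ℝ H]
    (φ : Fin n → H) (τ : Finset (Fin n)) : ℝ :=
  match τ.sort (· ≤ ·) with
  | [a, b, c] =>
      (1/2) * Real.sqrt (‖φ b - φ a‖ ^ 2 * ‖φ c - φ a‖ ^ 2 -
        (inner ℝ (φ b - φ a) (φ c - φ a) : ℝ) ^ 2)
  | _ => 0

section aux

variable {n : ℕ}

lemma sort3 {τ : Finset (Fin n)} (h : τ.card = 3) :
    ∃ a b c : Fin n, a < b ∧ b < c ∧ τ.sort (· ≤ ·) = [a, b, c] ∧ τ = {a, b, c} := by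
  have hlen : (τ.sort (· ≤ ·)).length = 3 := by rw [Finset.length_sort, h]
  obtain ⟨a, b, c, habc⟩ := List.length_eq_three.mp hlen
  have hs := (Finset.sortedLT_sort τ).pairwise
  rw [habc] at hs
  simp only [List.pairwise_cons, List.mem_cons, List.mem_singleton, List.not_mem_nil] at hs
  refine ⟨a, b, c, by tauto, by tauto, habc, ?_⟩
  have ht := Finset.sort_toFinset (r := (· ≤ ·)) (s := τ)
  rw [habc] at ht
  simpa using ht.symm

lemma count_tri {n : ℕ} {u v : Fin n} (huv : u ≠ v) :
    ((univ : Finset (Finset (Fin n))).filter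
      (fun τ => τ.card = 3 ∧ u ∈ τ ∧ v ∈ τ)).card = n - 2 := by
  classical
  have hcard2 : ({u, v} : Finset (Fin n)).card = 2 := by
    rw [Finset.card_insert_of_notMem (by simpa using huv), Finset.card_singleton]
  have := Finset.card_bij'
    (i := fun (τ : Finset (Fin n)) (_ : τ ∈ (univ : Finset (Finset (Fin n))).filter
      (fun τ => τ.card = 3 ∧ u ∈ τ ∧ v ∈ τ)) => τ \ {u, v})
    (j := fun (s : Finset (Fin n)) (_ : s ∈ (univ \ ({u,v} : Finset (Fin n))).powersetCard 1) =>
      s ∪ {u, v})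
    (hi := ?_) (hj := ?_) (left_inv := ?_) (right_inv := ?_)
  · rw [this, Finset.card_powersetCard]
    rw [Finset.card_sdiff_of_subset (by simp), hcard2, Finset.card_univ, Fintype.card_fin]
    simp [Nat.choose_one_right]
  · intro τ hτ
    simp only [Finset.mem_filter, Finset.mem_univ, true_and] at hτ
    obtain ⟨h3, hu, hv⟩ := hτ
    have hsub : ({u, v} : Finset (Fin n)) ⊆ τ := by
      intro x hx; simp at hx; rcases hx with rfl | rfl <;> assumption
    rw [Finset.mem_powersetCard]
    constructor
    · intro x hx
      simp only [Finset.mem_sdiff] at hx ⊢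
      exact ⟨Finset.mem_univ x, hx.2⟩
    · rw [Finset.card_sdiff_of_subset hsub, h3, hcard2]
  · intro s hs
    rw [Finset.mem_powersetCard] at hs
    obtain ⟨hsub, h1⟩ := hs
    have hdisj : Disjoint s ({u, v} : Finset (Fin n)) := by
      rw [Finset.disjoint_left]
      intro x hx hx2
      have := hsub hx
      simp only [Finset.mem_sdiff] at this
      exact this.2 hx2
    simp only [Finset.mem_filter, Finset.mem_univ, true_and]
    refine ⟨?_, ?_, ?_⟩
    · rw [Finset.card_union_of_disjoint hdisj, h1, hcard2]
    · simp
    · simp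
  · intro τ hτ
    simp only [Finset.mem_filter, Finset.mem_univ, true_and] at hτ
    obtain ⟨h3, hu, hv⟩ := hτ
    have hsub : ({u, v} : Finset (Fin n)) ⊆ τ := by
      intro x hx; simp at hx; rcases hx with rfl | rfl <;> assumption
    exact Finset.sdiff_union_of_subset hsub
  · intro s hs
    rw [Finset.mem_powersetCard] at hs
    obtain ⟨hsub, h1⟩ := hs
    ext x
    simp only [Finset.mem_sdiff, Finset.mem_union]
    constructor
    · rintro ⟨h | h, h2⟩
      · exact h
      · exact absurd h h2
    · intro hx
      have := hsub hx
      simp only [Finset.mem_sdiff] at this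
      exact ⟨Or.inl hx, this.2⟩

lemma tri_double_count {n : ℕ} (γ : Fin n → Fin n → ℝ) :
    ∑ τ ∈ univ.filter (fun τ : Finset (Fin n) => τ.card = 3),
      (∑ u : Fin n, ∑ v ∈ univ.filter (fun v => u < v),
        (if u ∈ τ ∧ v ∈ τ then γ u v else 0))
    = ((n - 2 : ℕ) : ℝ) * ∑ u : Fin n, ∑ v ∈ univ.filter (fun v => u < v), γ u v := by
  classical
  rw [Finset.sum_comm]
  have step : ∀ u : Fin n,
      ∑ τ ∈ univ.filter (fun τ : Finset (Fin n) => τ.card = 3),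
        ∑ v ∈ univ.filter (fun v => u < v), (if u ∈ τ ∧ v ∈ τ then γ u v else 0)
      = ∑ v ∈ univ.filter (fun v => u < v), ((n - 2 : ℕ) : ℝ) * γ u v := by
    intro u
    rw [Finset.sum_comm]
    refine Finset.sum_congr rfl fun v hv => ?_
    have huv : u ≠ v := ne_of_lt (Finset.mem_filter.mp hv).2
    have : ∑ τ ∈ univ.filter (fun τ : Finset (Fin n) => τ.card = 3),
        (if u ∈ τ ∧ v ∈ τ then γ u v else 0)
        = ∑ τ ∈ (univ.filter (fun τ : Finset (Fin n) => τ.card = 3)).filter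
            (fun τ => u ∈ τ ∧ v ∈ τ), γ u v := (Finset.sum_filter _ _).symm
    rw [this, Finset.sum_const, Finset.filter_filter, nsmul_eq_mul]
    congr 1
    exact_mod_cast count_tri huv
  rw [Finset.mul_sum]
  refine Finset.sum_congr rfl fun u _ => ?_
  rw [step u, Finset.mul_sum]

lemma tri_eval {n : ℕ} (γ : Fin n → Fin n → ℝ) {a b c : Fin n} (hab : a < b) (hbc : b < c) :
    ∑ u : Fin n, ∑ v ∈ univ.filter (fun v => u < v),
      (if u ∈ ({a, b, c} : Finset (Fin n)) ∧ v ∈ ({a, b, c} : Finset (Fin n)) then γ u v else 0)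
    = γ a b + γ a c + γ b c := by
  classical
  have hac : a < c := lt_trans hab hbc
  have hprod : ∀ u : Fin n,
      ∑ v ∈ univ.filter (fun v => u < v),
        (if u ∈ ({a, b, c} : Finset (Fin n)) ∧ v ∈ ({a, b, c} : Finset (Fin n)) then γ u v else 0)
      = ∑ v : Fin n, (if u < v ∧ u ∈ ({a, b, c} : Finset (Fin n)) ∧ v ∈ ({a, b, c} : Finset (Fin n))
          then γ u v else 0) := by
    intro u
    rw [Finset.sum_filter]
    refine Finset.sum_congr rfl fun v _ => ?_
    by_cases h1 : u < v <;> by_cases h2 : u ∈ ({a, b, c} : Finset (Fin n)) ∧ v ∈ ({a, b, c} : Finset (Fin n)) <;>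
      simp [h1, h2]
  simp_rw [hprod]
  rw [← Finset.sum_product']
  rw [Finset.univ_product_univ]
  have hfilt : ((univ : Finset (Fin n × Fin n)).filter
      (fun p => p.1 < p.2 ∧ p.1 ∈ ({a, b, c} : Finset (Fin n)) ∧ p.2 ∈ ({a, b, c} : Finset (Fin n))))
      = {(a, b), (a, c), (b, c)} := by
    ext ⟨u, v⟩
    simp only [Finset.mem_filter, Finset.mem_univ, true_and, Finset.mem_insert,
      Finset.mem_singleton, Prod.mk.injEq]
    constructor
    · rintro ⟨huv, (rfl | rfl | rfl), (rfl | rfl | rfl)⟩ <;>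
        first
          | tauto
          | (exfalso; revert huv hab hbc; simp only [Fin.lt_def]; omega)
    · rintro (⟨rfl, rfl⟩ | ⟨rfl, rfl⟩ | ⟨rfl, rfl⟩) <;>
        refine ⟨by assumption, by simp, by simp⟩
  have : ∑ p ∈ (univ : Finset (Fin n × Fin n)),
      (if p.1 < p.2 ∧ p.1 ∈ ({a, b, c} : Finset (Fin n)) ∧ p.2 ∈ ({a, b, c} : Finset (Fin n))
        then γ p.1 p.2 else 0)
      = ∑ p ∈ ((univ : Finset (Fin n × Fin n)).filter
          (fun p => p.1 < p.2 ∧ p.1 ∈ ({a, b, c} : Finset (Fin n)) ∧ p.2 ∈ ({a, b, c} : Finset (Fin n)))),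
          γ p.1 p.2 := (Finset.sum_filter _ _).symm
  rw [this, hfilt]
  have h1 : ((a, b) : Fin n × Fin n) ∉ ({(a, c), (b, c)} : Finset (Fin n × Fin n)) := by
    simp only [Finset.mem_insert, Finset.mem_singleton, Prod.mk.injEq]
    push_neg
    constructor
    · intro _; exact ne_of_lt hbc
    · intro h; exact absurd h (ne_of_lt hab)
  have h2 : ((a, c) : Fin n × Fin n) ∉ ({(b, c)} : Finset (Fin n × Fin n)) := by
    simp only [Finset.mem_singleton, Prod.mk.injEq]
    intro h; exact absurd h.1 (ne_of_lt hab)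
  rw [Finset.sum_insert h1, Finset.sum_insert h2, Finset.sum_singleton]
  ring

lemma lagrange (m : ℕ) (x y : Fin m → ℝ) :
    ∑ p : Fin m, ∑ q : Fin m, (x p * y q - x q * y p) ^ 2
      = 2 * ((∑ p, x p ^ 2) * (∑ q, y q ^ 2) - (∑ p, x p * y p) ^ 2) := by
  have h : ∀ p q : Fin m, (x p * y q - x q * y p) ^ 2
      = x p ^ 2 * y q ^ 2 + y p ^ 2 * x q ^ 2 - 2 * x p * y p * (x q * y q) := by
    intros; ring
  simp_rw [h, Finset.sum_sub_distrib, Finset.sum_add_distrib, ← Finset.mul_sum, ← Finset.sum_mul,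
    mul_assoc, ← Finset.mul_sum]
  ring

end aux

set_option maxHeartbeats 1000000 in
theorem stmt11 {n : ℕ} (hn : 3 ≤ n) (ε : ℝ) (hε : 0 < ε)
    {H : Type*} [NormedAddCommGroup H] [InnerProductSpace ℝ H]
    (X : Finset (Finset (Fin n))) (hX3 : ∀ f ∈ X, f.card = 3)
    (hXcard : (X.card : ℝ) ≤ (n : ℝ) ^ ((2 : ℝ) + ε))
    (hfill : ∀ τ : Finset (Fin n), τ.card = 3 → ∃ y ⊆ X, IsFilling y τ)
    (hspec : ∀ β : Fin n → Fin n → ℝ, (∀ u v, β u v = - β v u) →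
      (∀ v : Fin n, ∑ u ∈ Finset.univ.erase v, β u v = 0) →
      ∑ f ∈ X, dOne β f ^ 2 ≥ ((n : ℝ) ^ ε / 3) * normSq β)
    (φ : Fin n → H)
    (hφ : ∀ τ : Finset (Fin n), τ.card = 3 → (fillIn X τ : ℝ) ≤ triArea φ τ) :
    ∃ f ∈ X,
      (1 / (9 * (n : ℝ) ^ 3)) *
          ∑ τ ∈ Finset.univ.filter (fun τ : Finset (Fin n) => τ.card = 3),
            (fillIn X τ : ℝ) ^ 2 ≤
        triArea φ f ^ 2 := by
  classical
  have hn0 : (0 : ℝ) < n := by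
    have : (3:ℝ) ≤ (n:ℝ) := by exact_mod_cast hn
    linarith
  set eN : ℝ := (n : ℝ) ^ ε with heNdef
  have heN : (0 : ℝ) < eN := Real.rpow_pos_of_pos hn0 ε
  -- X is nonempty
  have hXne : X.Nonempty := by
    have h0 : (0:ℕ) < n := by omega
    have h1 : (1:ℕ) < n := by omega
    have h2 : (2:ℕ) < n := by omega
    set v0 : Fin n := ⟨0, h0⟩
    set v1 : Fin n := ⟨1, h1⟩
    set v2 : Fin n := ⟨2, h2⟩
    have hne01 : v0 ≠ v1 := by simp [v0, v1, Fin.ext_iff]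
    have hne02 : v0 ≠ v2 := by simp [v0, v2, Fin.ext_iff]
    have hne12 : v1 ≠ v2 := by simp [v1, v2, Fin.ext_iff]
    have hcard : ({v0, v1, v2} : Finset (Fin n)).card = 3 := by
      rw [Finset.card_insert_of_notMem (by simp [hne01, hne02]),
        Finset.card_insert_of_notMem (by simp [hne12]), Finset.card_singleton]
    obtain ⟨y, hyX, hfil⟩ := hfill _ hcard
    have hyne : y.Nonempty := by
      rcases y.eq_empty_or_nonempty with hy | hy
      · exfalso
        have hcard2 : ({v0, v1} : Finset (Fin n)).card = 2 := by
          rw [Finset.card_insert_of_notMem (by simp [hne01]), Finset.card_singleton]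
        have h := hfil.2 {v0, v1} hcard2
        have hsub : ({v0, v1} : Finset (Fin n)) ⊆ {v0, v1, v2} := by
          intro x hx
          simp only [Finset.mem_insert, Finset.mem_singleton] at hx ⊢
          tauto
        rw [hy, if_pos hsub] at h
        simp at h
      · exact hy
    obtain ⟨f0, hf0⟩ := hyne
    exact ⟨f0, hyX hf0⟩
  -- setup
  set V : Submodule ℝ H := Submodule.span ℝ (Set.range φ) with hV
  haveI : FiniteDimensional ℝ V := FiniteDimensional.span_of_finite ℝ (Set.finite_range φ)
  set m : ℕ := Module.finrank ℝ V with hm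
  let bs : OrthonormalBasis (Fin m) ℝ V := stdOrthonormalBasis ℝ V
  let ψ : Fin n → V := fun i => ⟨φ i, Submodule.subset_span ⟨i, rfl⟩⟩
  let C : Fin m × Fin m → V → V → ℝ := fun pq x y =>
    (inner ℝ x (bs pq.1) : ℝ) * (inner ℝ y (bs pq.2) : ℝ)
      - (inner ℝ x (bs pq.2) : ℝ) * (inner ℝ y (bs pq.1) : ℝ)
  let σ : V := ∑ i, ψ i
  let β : Fin m × Fin m → Fin n → Fin n → ℝ := fun pq u v =>
    C pq (ψ u) (ψ v) + (n : ℝ)⁻¹ * C pq σ (ψ u) - (n : ℝ)⁻¹ * C pq σ (ψ v)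
  have hanti : ∀ pq u v, β pq u v = - β pq v u := by
    intro pq u v
    simp only [β, C]
    ring
  have hCsumL : ∀ pq (s : Finset (Fin n)) (z : V),
      ∑ u ∈ s, C pq (ψ u) z = C pq (∑ u ∈ s, ψ u) z := by
    intro pq s z
    simp only [C, sum_inner, Finset.sum_sub_distrib, Finset.sum_mul]
  have hCsumR : ∀ pq (s : Finset (Fin n)) (z : V),
      ∑ u ∈ s, C pq z (ψ u) = C pq z (∑ u ∈ s, ψ u) := by
    intro pq s z
    simp only [C, Finset.sum_sub_distrib, ← Finset.mul_sum, sum_inner]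
  have hCxx : ∀ pq (z : V), C pq z z = 0 := by
    intro pq z; simp only [C]; ring
  have hsum_erase : ∀ v : Fin n, ∑ u ∈ Finset.univ.erase v, ψ u = σ - ψ v := by
    intro v
    rw [Finset.sum_erase_eq_sub (Finset.mem_univ v)]
  have hcard_erase : ∀ v : Fin n, ((Finset.univ : Finset (Fin n)).erase v).card = n - 1 := by
    intro v
    rw [Finset.card_erase_of_mem (Finset.mem_univ v), Finset.card_univ, Fintype.card_fin]
  have hcocl : ∀ pq (v : Fin n), ∑ u ∈ Finset.univ.erase v, β pq u v = 0 := by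
    intro pq v
    have hsub1 : C pq (σ - ψ v) (ψ v) = C pq σ (ψ v) - C pq (ψ v) (ψ v) := by
      simp only [C, inner_sub_left]; ring
    have hsub2 : C pq σ (σ - ψ v) = C pq σ σ - C pq σ (ψ v) := by
      simp only [C, inner_sub_left]; ring
    have hcast : ((n - 1 : ℕ) : ℝ) = (n : ℝ) - 1 := by
      have h1 : 1 ≤ n := by omega
      push_cast [h1]; ring
    have hnne : (n : ℝ) ≠ 0 := ne_of_gt hn0
    simp only [β]
    rw [Finset.sum_sub_distrib, Finset.sum_add_distrib, ← Finset.mul_sum, ← Finset.mul_sum,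
      hCsumL, hCsumR, hsum_erase, Finset.sum_const, hcard_erase, nsmul_eq_mul,
      hsub1, hsub2, hCxx, hCxx, hcast]
    field_simp
    ring
  have key1 : ∀ τ : Finset (Fin n), τ.card = 3 →
      ∑ pq : Fin m × Fin m, dOne (β pq) τ ^ 2 = 8 * triArea φ τ ^ 2 := by
    intro τ hτ
    obtain ⟨a1, a2, a3, h12, h23, hsort, hset⟩ := sort3 hτ
    have hdOne : ∀ pq, dOne (β pq) τ = β pq a1 a2 - β pq a1 a3 + β pq a2 a3 := by
      intro pq
      unfold dOne
      rw [hsort]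
    have hcu : ((ψ a2 - ψ a1 : V) : H) = φ a2 - φ a1 := rfl
    have hcv : ((ψ a3 - ψ a1 : V) : H) = φ a3 - φ a1 := rfl
    have hnu : ‖(ψ a2 - ψ a1 : V)‖ = ‖φ a2 - φ a1‖ := by rw [← hcu]; rfl
    have hnv : ‖(ψ a3 - ψ a1 : V)‖ = ‖φ a3 - φ a1‖ := by rw [← hcv]; rfl
    have hin : (inner ℝ (ψ a2 - ψ a1 : V) (ψ a3 - ψ a1 : V) : ℝ)
        = (inner ℝ (φ a2 - φ a1) (φ a3 - φ a1) : ℝ) := by rw [← hcu, ← hcv]; rfl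
    have hC : ∀ pq, dOne (β pq) τ
        = (inner ℝ (ψ a2 - ψ a1 : V) (bs pq.1) : ℝ) * (inner ℝ (ψ a3 - ψ a1 : V) (bs pq.2) : ℝ)
          - (inner ℝ (ψ a2 - ψ a1 : V) (bs pq.2) : ℝ) * (inner ℝ (ψ a3 - ψ a1 : V) (bs pq.1) : ℝ) := by
      intro pq
      rw [hdOne]
      simp only [β, C, inner_sub_left]
      ring
    have hsum : ∑ pq : Fin m × Fin m, dOne (β pq) τ ^ 2
        = 2 * ((∑ p, (inner ℝ (ψ a2 - ψ a1 : V) (bs p) : ℝ) ^ 2)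
              * (∑ q, (inner ℝ (ψ a3 - ψ a1 : V) (bs q) : ℝ) ^ 2)
            - (∑ p, (inner ℝ (ψ a2 - ψ a1 : V) (bs p) : ℝ)
                * (inner ℝ (ψ a3 - ψ a1 : V) (bs p) : ℝ)) ^ 2) := by
      simp_rw [hC]
      rw [Fintype.sum_prod_type]
      exact lagrange m (fun p => (inner ℝ (ψ a2 - ψ a1 : V) (bs p) : ℝ))
        (fun p => (inner ℝ (ψ a3 - ψ a1 : V) (bs p) : ℝ))
    have hpar : ∀ w z : V, ∑ p, (inner ℝ w (bs p) : ℝ) * (inner ℝ z (bs p) : ℝ)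
        = (inner ℝ w z : ℝ) := by
      intro w z
      have h := bs.sum_inner_mul_inner w z
      calc ∑ p, (inner ℝ w (bs p) : ℝ) * (inner ℝ z (bs p) : ℝ)
          = ∑ p, (inner ℝ w (bs p) : ℝ) * (inner ℝ (bs p) z : ℝ) := by
            refine Finset.sum_congr rfl fun p _ => ?_
            rw [real_inner_comm (bs p) z]
        _ = (inner ℝ w z : ℝ) := h
    have hpar1 : ∑ p, (inner ℝ (ψ a2 - ψ a1 : V) (bs p) : ℝ) ^ 2
        = ‖φ a2 - φ a1‖ ^ 2 := by
      simp_rw [sq]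
      rw [hpar, ← hnu, real_inner_self_eq_norm_sq]
      ring
    have hpar2 : ∑ q, (inner ℝ (ψ a3 - ψ a1 : V) (bs q) : ℝ) ^ 2
        = ‖φ a3 - φ a1‖ ^ 2 := by
      simp_rw [sq]
      rw [hpar, ← hnv, real_inner_self_eq_norm_sq]
      ring
    have hpar3 : ∑ p, (inner ℝ (ψ a2 - ψ a1 : V) (bs p) : ℝ)
        * (inner ℝ (ψ a3 - ψ a1 : V) (bs p) : ℝ)
        = (inner ℝ (φ a2 - φ a1) (φ a3 - φ a1) : ℝ) := by
      rw [hpar, hin]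
    have harea : triArea φ τ = 1/2 * Real.sqrt (‖φ a2 - φ a1‖ ^ 2 * ‖φ a3 - φ a1‖ ^ 2 -
        (inner ℝ (φ a2 - φ a1) (φ a3 - φ a1) : ℝ) ^ 2) := by
      unfold triArea
      rw [hsort]
    have hG0 : 0 ≤ ‖φ a2 - φ a1‖ ^ 2 * ‖φ a3 - φ a1‖ ^ 2 -
        (inner ℝ (φ a2 - φ a1) (φ a3 - φ a1) : ℝ) ^ 2 := by
      have h1 := real_inner_mul_inner_self_le (φ a2 - φ a1) (φ a3 - φ a1)
      have h2 := real_inner_self_eq_norm_sq (φ a2 - φ a1)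
      have h3 := real_inner_self_eq_norm_sq (φ a3 - φ a1)
      nlinarith [h1, h2, h3]
    rw [hsum, hpar1, hpar2, hpar3, harea]
    rw [mul_pow, Real.sq_sqrt hG0]
    ring
  -- assemble
  set T3 : Finset (Finset (Fin n)) := univ.filter (fun τ : Finset (Fin n) => τ.card = 3) with hT3def
  set S : ℝ := ∑ f ∈ X, triArea φ f ^ 2 with hSdef
  set NN : ℝ := ∑ pq : Fin m × Fin m, normSq (β pq) with hNNdef
  have hXsum : ∑ pq : Fin m × Fin m, ∑ f ∈ X, dOne (β pq) f ^ 2 = 8 * S := by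
    rw [Finset.sum_comm, hSdef, Finset.mul_sum]
    exact Finset.sum_congr rfl fun f hf => key1 f (hX3 f hf)
  have hNX : eN / 3 * NN ≤ 8 * S := by
    rw [← hXsum, hNNdef, Finset.mul_sum]
    exact Finset.sum_le_sum fun pq _ => hspec (β pq) (hanti pq) (hcocl pq)
  have hT3sum : ∑ pq : Fin m × Fin m, ∑ τ ∈ T3, dOne (β pq) τ ^ 2
      = 8 * ∑ τ ∈ T3, triArea φ τ ^ 2 := by
    rw [Finset.sum_comm, Finset.mul_sum]
    exact Finset.sum_congr rfl fun τ hτ => key1 τ (Finset.mem_filter.mp hτ).2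
  have hbound : ∀ pq : Fin m × Fin m, ∑ τ ∈ T3, dOne (β pq) τ ^ 2
      ≤ 3 * (((n - 2 : ℕ) : ℝ) * normSq (β pq)) := by
    intro pq
    have hstep : ∀ τ ∈ T3, dOne (β pq) τ ^ 2
        ≤ 3 * ∑ u : Fin n, ∑ v ∈ univ.filter (fun v => u < v),
            (if u ∈ τ ∧ v ∈ τ then (β pq u v) ^ 2 else 0) := by
      intro τ hτ
      obtain ⟨a1, a2, a3, h12, h23, hsort, hset⟩ := sort3 (Finset.mem_filter.mp hτ).2
      have hd : dOne (β pq) τ = β pq a1 a2 - β pq a1 a3 + β pq a2 a3 := by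
        unfold dOne; rw [hsort]
      rw [hd, hset, tri_eval (fun u v => (β pq u v) ^ 2) h12 h23]
      nlinarith [sq_nonneg (β pq a1 a2 + β pq a1 a3), sq_nonneg (β pq a1 a3 + β pq a2 a3),
        sq_nonneg (β pq a1 a2 - β pq a2 a3)]
    calc ∑ τ ∈ T3, dOne (β pq) τ ^ 2
        ≤ ∑ τ ∈ T3, 3 * ∑ u : Fin n, ∑ v ∈ univ.filter (fun v => u < v),
            (if u ∈ τ ∧ v ∈ τ then (β pq u v) ^ 2 else 0) := Finset.sum_le_sum hstep
      _ = 3 * (((n - 2 : ℕ) : ℝ) * normSq (β pq)) := by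
          rw [← Finset.mul_sum, hT3def, tri_double_count (fun u v => (β pq u v) ^ 2)]
          rfl
  have h8A : 8 * ∑ τ ∈ T3, triArea φ τ ^ 2 ≤ 3 * (((n - 2 : ℕ) : ℝ) * NN) := by
    rw [← hT3sum, hNNdef, Finset.mul_sum, Finset.mul_sum]
    exact Finset.sum_le_sum fun pq _ => hbound pq
  have hTA : ∑ τ ∈ T3, (fillIn X τ : ℝ) ^ 2 ≤ ∑ τ ∈ T3, triArea φ τ ^ 2 := by
    refine Finset.sum_le_sum fun τ hτ => ?_
    have h3 := (Finset.mem_filter.mp hτ).2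
    exact pow_le_pow_left₀ (Nat.cast_nonneg _) (hφ τ h3) 2
  obtain ⟨fM, hfM, hmax⟩ := X.exists_max_image (fun f => triArea φ f ^ 2) hXne
  refine ⟨fM, hfM, ?_⟩
  have hSA : S ≤ (X.card : ℝ) * (triArea φ fM ^ 2) := by
    rw [hSdef]
    calc ∑ f ∈ X, triArea φ f ^ 2 ≤ ∑ f ∈ X, triArea φ fM ^ 2 :=
          Finset.sum_le_sum fun f hf => hmax f hf
      _ = (X.card : ℝ) * (triArea φ fM ^ 2) := by rw [Finset.sum_const, nsmul_eq_mul]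
  have hA0 : (0:ℝ) ≤ triArea φ fM ^ 2 := sq_nonneg _
  have hrw : (n : ℝ) ^ ((2:ℝ) + ε) = (n:ℝ) ^ 2 * eN := by
    rw [Real.rpow_add hn0, heNdef]
    congr 1
    rw [show ((2:ℝ)) = ((2:ℕ):ℝ) by norm_num, Real.rpow_natCast]
  have hXc : (X.card : ℝ) ≤ (n:ℝ) ^ 2 * eN := by rw [← hrw]; exact hXcard
  have hc2 : ((n - 2 : ℕ) : ℝ) = (n:ℝ) - 2 := by
    have h2 : 2 ≤ n := by omega
    push_cast [h2]; ring
  have hnR : (3:ℝ) ≤ (n:ℝ) := by exact_mod_cast hn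
  have hn2 : (0:ℝ) ≤ (n:ℝ) - 2 := by linarith
  set A2 : ℝ := triArea φ fM ^ 2 with hA2def
  set AA : ℝ := ∑ τ ∈ T3, triArea φ τ ^ 2 with hAAdef
  set TT : ℝ := ∑ τ ∈ T3, (fillIn X τ : ℝ) ^ 2 with hTTdef
  have hS2 : S ≤ (n:ℝ) ^ 2 * eN * A2 :=
    le_trans hSA (mul_le_mul_of_nonneg_right hXc hA0)
  have h1 : eN * NN ≤ 24 * S := by linarith [hNX]
  have hchain : eN * (8 * AA) ≤ eN * (72 * ((n:ℝ) - 2) * ((n:ℝ) ^ 2 * A2)) := by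
    calc eN * (8 * AA) ≤ eN * (3 * (((n:ℝ) - 2) * NN)) := by
          rw [hc2] at h8A
          exact mul_le_mul_of_nonneg_left h8A heN.le
      _ = 3 * ((n:ℝ) - 2) * (eN * NN) := by ring
      _ ≤ 3 * ((n:ℝ) - 2) * (24 * S) := by
          apply mul_le_mul_of_nonneg_left h1
          linarith
      _ ≤ 3 * ((n:ℝ) - 2) * (24 * ((n:ℝ) ^ 2 * eN * A2)) := by
          apply mul_le_mul_of_nonneg_left _ (by linarith : (0:ℝ) ≤ 3 * ((n:ℝ) - 2))
          linarith [hS2]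
      _ = eN * (72 * ((n:ℝ) - 2) * ((n:ℝ) ^ 2 * A2)) := by ring
  have hAA9 : 8 * AA ≤ 72 * ((n:ℝ) - 2) * ((n:ℝ) ^ 2 * A2) :=
    le_of_mul_le_mul_left hchain heN
  have h9 : (0:ℝ) < 9 * (n:ℝ) ^ 3 := by positivity
  rw [one_div, inv_mul_le_iff₀ h9]
  nlinarith [hTA, hAA9, hA0, hnR]
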